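/- Let σx := !![0,1;1,0] and σz := !![1,0;0,−1] as matrices in Matrix (Fin 2) (Fin 2) ℂ, and on ℂ⁴ (index type Fin 2 × Fin 2, via the Kronecker product ⊗ₖ) set X₁ := σx ⊗ₖ 1, X₂ := 1 ⊗ₖ σx, Z := σz ⊗ₖ σz, and for θ : ℝ let U θ := Matrix.exp ((Complex.I·θ)•Z) and Θ θ := X₁·(U θ·X₂) − (U θ·X₂)·X₁. Then for all θ : ℝ, (Θ θ)ᴴ · (Θ θ) = ((4·(Real.sin θ)² : ℝ) : ℂ) • (1 : Matrix (Fin 2 × Fin 2) (Fin 2 × Fin 2) ℂ). -/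

import Mathlib

open Matrix Kronecker NormedSpace

noncomputable section

def σx : Matrix (Fin 2) (Fin 2) ℂ := !![0, 1; 1, 0]
def σz : Matrix (Fin 2) (Fin 2) ℂ := !![1, 0; 0, -1]
def X₁ : Matrix (Fin 2 × Fin 2) (Fin 2 × Fin 2) ℂ := σx ⊗ₖ 1
def X₂ : Matrix (Fin 2 × Fin 2) (Fin 2 × Fin 2) ℂ := (1 : Matrix (Fin 2) (Fin 2) ℂ) ⊗ₖ σx
def Z : Matrix (Fin 2 × Fin 2) (Fin 2 × Fin 2) ℂ := σz ⊗ₖ σz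
def U (θ : ℝ) : Matrix (Fin 2 × Fin 2) (Fin 2 × Fin 2) ℂ := exp ((Complex.I * θ) • Z)

def Θ (θ : ℝ) : Matrix (Fin 2 × Fin 2) (Fin 2 × Fin 2) ℂ :=
  X₁ * (U θ * X₂) - (U θ * X₂) * X₁

lemma hdiag (θ : ℝ) : (Complex.I * θ) • Z =
    diagonal (fun p : Fin 2 × Fin 2 => if p.1 = p.2 then Complex.I * θ else -(Complex.I * θ)) := by
  ext ⟨a, b⟩ ⟨c, d⟩
  fin_cases a <;> fin_cases b <;> fin_cases c <;> fin_cases d <;>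
    simp [Z, σz, diagonal, kroneckerMap_apply, Prod.ext_iff]

lemma hU (θ : ℝ) : U θ =
    diagonal (fun p : Fin 2 × Fin 2 =>
      if p.1 = p.2 then Complex.exp (Complex.I * θ) else Complex.exp (-(Complex.I * θ))) := by
  rw [U, hdiag, Matrix.exp_diagonal, Pi.exp_def]
  ext p q
  rcases eq_or_ne p q with h | h
  · subst h
    simp only [diagonal_apply_eq]
    split_ifs <;> rw [Complex.exp_eq_exp_ℂ]
  · simp [diagonal_apply_ne _ h]

lemma hU2 (θ : ℝ) : U θ = (Complex.cos θ) • 1 + (Complex.sin θ * Complex.I) • Z := by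
  have e1 : Complex.exp (Complex.I * θ) = Complex.cos θ + Complex.sin θ * Complex.I := by
    rw [mul_comm, Complex.exp_mul_I]
  have e2 : Complex.exp (-(Complex.I * θ)) = Complex.cos θ - Complex.sin θ * Complex.I := by
    rw [mul_comm, ← neg_mul, Complex.exp_mul_I, Complex.cos_neg, Complex.sin_neg]; ring
  rw [hU]
  ext ⟨a, b⟩ ⟨c, d⟩
  fin_cases a <;> fin_cases b <;> fin_cases c <;> fin_cases d <;>
    simp [Z, σz, diagonal, kroneckerMap_apply, Prod.ext_iff, e1, e2, Matrix.one_apply] <;> ring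

lemma comm12 : X₁ * X₂ = X₂ * X₁ := by
  ext ⟨a, b⟩ ⟨c, d⟩
  fin_cases a <;> fin_cases b <;> fin_cases c <;> fin_cases d <;>
    simp [X₁, X₂, σx, Matrix.mul_apply, kroneckerMap_apply, Fintype.sum_prod_type,
      Fin.sum_univ_succ, Matrix.one_apply]

lemma anticomm1Z : X₁ * Z = -(Z * X₁) := by
  ext ⟨a, b⟩ ⟨c, d⟩
  fin_cases a <;> fin_cases b <;> fin_cases c <;> fin_cases d <;>
    simp [X₁, Z, σx, σz, Matrix.mul_apply, kroneckerMap_apply, Fintype.sum_prod_type,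
      Fin.sum_univ_succ, Matrix.one_apply]

lemma hZH : Zᴴ = Z := by
  ext ⟨a, b⟩ ⟨c, d⟩
  fin_cases a <;> fin_cases b <;> fin_cases c <;> fin_cases d <;>
    simp [Z, σz, Matrix.conjTranspose_apply, kroneckerMap_apply]

lemma hX1H : X₁ᴴ = X₁ := by
  ext ⟨a, b⟩ ⟨c, d⟩
  fin_cases a <;> fin_cases b <;> fin_cases c <;> fin_cases d <;>
    simp [X₁, σx, Matrix.conjTranspose_apply, kroneckerMap_apply, Matrix.one_apply, Prod.ext_iff]

lemma hX2H : X₂ᴴ = X₂ := by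
  ext ⟨a, b⟩ ⟨c, d⟩
  fin_cases a <;> fin_cases b <;> fin_cases c <;> fin_cases d <;>
    simp [X₂, σx, Matrix.conjTranspose_apply, kroneckerMap_apply, Matrix.one_apply, Prod.ext_iff]

lemma sqZ : Z * Z = 1 := by
  ext ⟨a, b⟩ ⟨c, d⟩
  fin_cases a <;> fin_cases b <;> fin_cases c <;> fin_cases d <;>
    simp [Z, σz, Matrix.mul_apply, kroneckerMap_apply, Fintype.sum_prod_type,
      Fin.sum_univ_succ, Matrix.one_apply, Prod.ext_iff]

lemma sqX1 : X₁ * X₁ = 1 := by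
  ext ⟨a, b⟩ ⟨c, d⟩
  fin_cases a <;> fin_cases b <;> fin_cases c <;> fin_cases d <;>
    simp [X₁, σx, Matrix.mul_apply, kroneckerMap_apply, Fintype.sum_prod_type,
      Fin.sum_univ_succ, Matrix.one_apply, Prod.ext_iff]

lemma sqX2 : X₂ * X₂ = 1 := by
  ext ⟨a, b⟩ ⟨c, d⟩
  fin_cases a <;> fin_cases b <;> fin_cases c <;> fin_cases d <;>
    simp [X₂, σx, Matrix.mul_apply, kroneckerMap_apply, Fintype.sum_prod_type,
      Fin.sum_univ_succ, Matrix.one_apply, Prod.ext_iff]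

lemma hA : (Z * (X₁ * X₂))ᴴ * (Z * (X₁ * X₂)) = 1 := by
  rw [Matrix.conjTranspose_mul, Matrix.conjTranspose_mul, hZH, hX1H, hX2H]
  calc X₂ * X₁ * Z * (Z * (X₁ * X₂)) = X₂ * (X₁ * ((Z * Z) * (X₁ * X₂))) := by
        simp only [Matrix.mul_assoc]
    _ = 1 := by rw [sqZ, one_mul, ← Matrix.mul_assoc X₁, sqX1, one_mul, sqX2]

lemma hΘ (θ : ℝ) : Θ θ = (-(2 * Complex.sin θ * Complex.I)) • (Z * (X₁ * X₂)) := by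
  have h1 : X₁ * (Z * X₂) = -(Z * (X₁ * X₂)) := by
    rw [← Matrix.mul_assoc, anticomm1Z, neg_mul, Matrix.mul_assoc]
  have h2 : (Z * X₂) * X₁ = Z * (X₁ * X₂) := by
    rw [Matrix.mul_assoc, ← comm12]
  rw [Θ, hU2]
  simp only [add_mul, mul_add, Matrix.mul_smul, Matrix.smul_mul, one_mul, h1, h2, comm12]
  module

/-- Closed form underlying Lemma B.3(1): `Θ† Θ = 4 sin² θ · 𝟙`. -/
theorem squared_commutator_closed_form (θ : ℝ) :
    (Θ θ)ᴴ * Θ θ =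
      ((4 * Real.sin θ ^ 2 : ℝ) : ℂ) • (1 : Matrix (Fin 2 × Fin 2) (Fin 2 × Fin 2) ℂ) := by
  rw [hΘ, Matrix.conjTranspose_smul, Matrix.smul_mul, Matrix.mul_smul, hA, smul_smul]
  congr 1
  rw [← Complex.ofReal_sin]
  simp only [star_neg, star_mul', Complex.star_def, Complex.conj_I, Complex.conj_ofReal, map_ofNat]
  push_cast
  ring_nf
  simp [Complex.I_sq]

end
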